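/- Let p be a prime, α < β in (0,1], and suppose β = a/b with b coprime to p. Set Δ_e := p^e⟨β⟩_e − p^e⟨α⟩_e, let ℓ := min{e : Δ_e ≥ 1}, and let s be the multiplicative order of p modulo b. Then for every k ≥ 0, Δ_{ℓ+s+k} ≥ p^k + 1. -/

import Mathlib

open MvPolynomial

/-- The `e`-th truncation of the non-terminating base `p` expansion of `α ∈ (0,1]`:
the unique multiple of `p^{-e}` with `⟨α⟩_e < α ≤ ⟨α⟩_e + p^{-e}`
(with the convention `⟨α⟩_e = 0` for `α ≤ 0`). -/
noncomputable def trunc (p e : ℕ) (α : ℝ) : ℝ :=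
  if α ≤ 0 then 0 else (⌈α * (p : ℝ) ^ e⌉ - 1) / (p : ℝ) ^ e

/-- The `e`-th digit (`e ≥ 1`) of the non-terminating base `p` expansion of `α ∈ (0,1]`,
namely `p^e ⟨α⟩_e - p^e ⟨α⟩_{e-1}`. -/
noncomputable def digit (p e : ℕ) (α : ℝ) : ℤ :=
  (⌈α * (p : ℝ) ^ e⌉ - 1) - p * (⌈α * (p : ℝ) ^ (e - 1)⌉ - 1)

/-- Least positive residue of `m` modulo `b`: the unique `r` with `1 ≤ r ≤ b`, `r ≡ m (mod b)`. -/
def lpr (m b : ℤ) : ℤ := if m % b = 0 then b else m % b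

/-- The `e`-th Frobenius power `m^{[p^e]} = (x_1^{p^e}, …, x_n^{p^e})`. -/
noncomputable def frobPow (p n : ℕ) (K : Type*) [Field K] (e : ℕ) :
    Ideal (MvPolynomial (Fin n) K) :=
  Ideal.span (Set.range fun i => (X i : MvPolynomial (Fin n) K) ^ p ^ e)

/-- `ν_f(p^e) = max { N | f^N ∉ m^{[p^e]} }`. -/
noncomputable def nu (p : ℕ) {n : ℕ} {K : Type*} [Field K]
    (f : MvPolynomial (Fin n) K) (e : ℕ) : ℕ :=
  sSup {N : ℕ | f ^ N ∉ frobPow p n K e}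

/-- The F-pure threshold `fpt(f) = lim_e ν_f(p^e)/p^e`; since the sequence is
non-decreasing and bounded, the limit equals the supremum. -/
noncomputable def fpt (p : ℕ) {n : ℕ} {K : Type*} [Field K]
    (f : MvPolynomial (Fin n) K) : ℝ :=
  ⨆ e : ℕ, (nu p f e : ℝ) / (p : ℝ) ^ e

/-- The maximal ideal `m = (x_1, …, x_n)`. -/
noncomputable def mIdeal (n : ℕ) (K : Type*) [Field K] : Ideal (MvPolynomial (Fin n) K) :=
  Ideal.span (Set.range (X : Fin n → MvPolynomial (Fin n) K))

/-- with `β = a/b`, `p ∤ b`, `ℓ = min{e : Δ_e ≥ 1}` and `s` the order of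
`p` mod `b`, one has `Δ_{ℓ+s+k} ≥ p^k + 1` for all `k ≥ 0`. -/
theorem stmt_6 (p : ℕ) (hp : p.Prime) (α β : ℝ) (a b : ℕ) (ha : 0 < a) (hb : 0 < b)
    (hcop : Nat.Coprime p b) (hβ : β = (a : ℝ) / b)
    (h0 : 0 < α) (hab : α < β) (hb1 : β ≤ 1)
    (Δ : ℕ → ℝ) (hΔ : ∀ e, Δ e = (p : ℝ) ^ e * trunc p e β - (p : ℝ) ^ e * trunc p e α)
    (ℓ : ℕ) (hℓ : ℓ = sInf {e : ℕ | 1 ≤ Δ e})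
    (s : ℕ) (hs : s = orderOf (p : ZMod b)) :
    ∀ k : ℕ, (p : ℝ) ^ k + 1 ≤ Δ (ℓ + s + k) := by
  intro k
  have hp1 : (1:ℝ) < p := by exact_mod_cast hp.one_lt
  have hp0 : (0:ℝ) < p := lt_trans one_pos hp1
  have hβ0 : 0 < β := lt_trans h0 hab
  have hbR : (0:ℝ) < b := by exact_mod_cast hb
  -- integer representation of Δ
  have key : ∀ e, Δ e = ((⌈β * (p:ℝ)^e⌉ - ⌈α * (p:ℝ)^e⌉ : ℤ) : ℝ) := by
    intro e
    have hpe : ((p:ℝ))^e ≠ 0 := by positivity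
    rw [hΔ, trunc, trunc, if_neg (not_le.mpr hβ0), if_neg (not_le.mpr h0)]
    push_cast
    field_simp
    ring
  -- single-step estimates
  have hstepβ : ∀ e, (p:ℤ) * (⌈β*(p:ℝ)^e⌉ - 1) + 1 ≤ ⌈β*(p:ℝ)^(e+1)⌉ := by
    intro e
    rw [Int.add_one_le_iff, Int.lt_ceil]
    push_cast
    rw [pow_succ]
    have h1 : (⌈β*(p:ℝ)^e⌉ : ℝ) - 1 < β*(p:ℝ)^e := by
      linarith [Int.ceil_lt_add_one (β*(p:ℝ)^e)]
    nlinarith [mul_lt_mul_of_pos_right h1 hp0]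
  have hstepα : ∀ e, ⌈α*(p:ℝ)^(e+1)⌉ ≤ (p:ℤ) * ⌈α*(p:ℝ)^e⌉ := by
    intro e
    rw [Int.ceil_le]
    push_cast
    rw [pow_succ]
    nlinarith [mul_le_mul_of_nonneg_right (Int.le_ceil (α*(p:ℝ)^e)) hp0.le]
  -- fractional-part lower bound for β
  have ht : ∀ e, 1 / (b:ℝ) ≤ β * (p:ℝ)^e - ⌈β * (p:ℝ)^e⌉ + 1 := by
    intro e
    set x := β * (p:ℝ)^e with hx
    have hbx : (b:ℝ) * x = (a:ℝ) * (p:ℝ)^e := by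
      rw [hx, hβ]
      field_simp
    have hz : (((a:ℤ) * (p:ℤ)^e - (b:ℤ) * ⌈x⌉ + (b:ℤ) : ℤ) : ℝ)
        = (b:ℝ) * (x - ⌈x⌉ + 1) := by
      push_cast
      linear_combination -hbx
    have hpos : (0:ℝ) < x - ⌈x⌉ + 1 := by linarith [Int.ceil_lt_add_one x]
    have hz0 : (0:ℤ) < (a:ℤ) * (p:ℤ)^e - (b:ℤ) * ⌈x⌉ + (b:ℤ) := by
      have : (0:ℝ) < (((a:ℤ) * (p:ℤ)^e - (b:ℤ) * ⌈x⌉ + (b:ℤ) : ℤ) : ℝ) := by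
        rw [hz]; exact mul_pos hbR hpos
      exact_mod_cast this
    have hz1 : (1:ℤ) ≤ (a:ℤ) * (p:ℤ)^e - (b:ℤ) * ⌈x⌉ + (b:ℤ) := hz0
    have hz1R : (1:ℝ) ≤ (b:ℝ) * (x - ⌈x⌉ + 1) := by
      rw [← hz]; exact_mod_cast hz1
    rw [div_le_iff₀ hbR]
    linarith
  -- p^s ≥ b + 1
  haveI : NeZero b := ⟨hb.ne'⟩
  have hs1 : 0 < s := by
    rw [hs, ← ZMod.coe_unitOfCoprime p hcop, orderOf_units]
    exact orderOf_pos _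
  have hps2 : 2 ≤ p^s := by
    calc 2 = 2^1 := rfl
    _ ≤ p^s := Nat.pow_le_pow_left hp.two_le s |>.trans' (by
        exact Nat.pow_le_pow_right (by norm_num) hs1)
  have hone : ((p:ZMod b))^s = 1 := by rw [hs]; exact pow_orderOf_eq_one _
  have hmod : p^s ≡ 1 [MOD b] := by
    have : ((p^s : ℕ) : ZMod b) = ((1:ℕ) : ZMod b) := by push_cast; simpa using hone
    exact (ZMod.natCast_eq_natCast_iff _ _ _).mp this
  have hdvd : b ∣ p^s - 1 := (Nat.modEq_iff_dvd' (by omega)).mp hmod.symm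
  have hble : b + 1 ≤ p^s := by
    have := Nat.le_of_dvd (by omega) hdvd
    omega
  have hbsR : (b:ℝ) + 1 ≤ (p:ℝ)^s := by exact_mod_cast hble
  -- the s-step jump for β
  have hβs : ∀ e, (p:ℤ)^s * (⌈β*(p:ℝ)^e⌉ - 1) + 2 ≤ ⌈β*(p:ℝ)^(e+s)⌉ := by
    intro e
    have hpsR : (0:ℝ) < (p:ℝ)^s := pow_pos hp0 s
    have h2 : (p:ℤ)^s * (⌈β*(p:ℝ)^e⌉ - 1) + 1 < ⌈β*(p:ℝ)^(e+s)⌉ := by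
      rw [Int.lt_ceil]
      push_cast
      rw [pow_add]
      have step1 : 1 < (p:ℝ)^s / b := by
        rw [lt_div_iff₀ hbR]; linarith
      have step2 : (p:ℝ)^s / b ≤ (p:ℝ)^s * (β*(p:ℝ)^e - ⌈β*(p:ℝ)^e⌉ + 1) := by
        rw [div_eq_mul_one_div]
        exact mul_le_mul_of_nonneg_left (ht e) hpsR.le
      nlinarith
    linarith
  -- the s-step bound for α
  have hαs : ∀ e, ⌈α*(p:ℝ)^(e+s)⌉ ≤ (p:ℤ)^s * ⌈α*(p:ℝ)^e⌉ := by
    intro e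
    rw [Int.ceil_le]
    push_cast
    rw [pow_add]
    nlinarith [mul_le_mul_of_nonneg_left (Int.le_ceil (α*(p:ℝ)^e)) (pow_pos hp0 s).le]
  -- {e | 1 ≤ Δ e} is nonempty and ℓ belongs to it
  have hne : {e : ℕ | 1 ≤ Δ e}.Nonempty := by
    obtain ⟨e, he⟩ := pow_unbounded_of_one_lt (2/(β-α)) hp1
    refine ⟨e, ?_⟩
    have hba : 0 < β - α := by linarith
    rw [div_lt_iff₀ hba] at he
    show 1 ≤ Δ e
    rw [key e]
    push_cast
    have h1 := Int.le_ceil (β*(p:ℝ)^e)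
    have h2 := Int.ceil_lt_add_one (α*(p:ℝ)^e)
    nlinarith
  have hℓmem : 1 ≤ Δ ℓ := by rw [hℓ]; exact Nat.sInf_mem hne
  have hDl : (1:ℤ) ≤ ⌈β*(p:ℝ)^ℓ⌉ - ⌈α*(p:ℝ)^ℓ⌉ := by
    have := hℓmem
    rw [key ℓ] at this
    exact_mod_cast this
  -- base case: Δ_{ℓ+s} ≥ 2
  have hDls : (2:ℤ) ≤ ⌈β*(p:ℝ)^(ℓ+s)⌉ - ⌈α*(p:ℝ)^(ℓ+s)⌉ := by
    have h1 := hβs ℓ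
    have h2 := hαs ℓ
    have hps0 : (0:ℤ) ≤ (p:ℤ)^s := by positivity
    nlinarith [mul_nonneg hps0 (by linarith :
      (0:ℤ) ≤ ⌈β*(p:ℝ)^ℓ⌉ - ⌈α*(p:ℝ)^ℓ⌉ - 1)]
  -- induction
  have main : ∀ k : ℕ, (p:ℤ)^k + 1 ≤ ⌈β*(p:ℝ)^(ℓ+s+k)⌉ - ⌈α*(p:ℝ)^(ℓ+s+k)⌉ := by
    intro k
    induction k with
    | zero => simpa using hDls
    | succ n ih =>
      have h1 := hstepβ (ℓ+s+n)
      have h2 := hstepα (ℓ+s+n)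
      have heq : ℓ+s+(n+1) = (ℓ+s+n)+1 := by ring
      rw [heq, pow_succ]
      have hp0' : (0:ℤ) ≤ (p:ℤ) := by positivity
      linarith [mul_le_mul_of_nonneg_left ih hp0']
  rw [key (ℓ+s+k)]
  exact_mod_cast main k
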